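/- arXiv:2309.03998 — 2 statements merged into one kernel-verified Lean document; each statement's English description precedes it below -/
import Mathlib

section
/- Let (x_k), (y_k) be generated by the Chambolle–Pock iteration x_{k+1} = prox_{τf}(x_k − τ L* y_k), y_{k+1} = prox_{σ g*}(y_k + σ L(x_{k+1} + θ(x_{k+1} − x_k))) with τ, σ > 0, let (x⋆, y⋆) be a KKT point (−L*y⋆ ∈ ∂f(x⋆), Lx⋆ ∈ ∂g*(y⋆)), and define F_k = f(x_{k+1}) − f(x⋆) + ⟨L*y⋆, x_{k+1} − x⋆⟩. Then for every nonnegative integer k, F_k − F_{k+1} ≤ (1/τ)⟨x_k − x_{k+1}, x_{k+1} − x_{k+2}⟩ + ⟨y⋆ − y_k, Lx_{k+1} − Lx_{k+2}⟩. -/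
open scoped RealInnerProductSpace
open Filter Topology

noncomputable section

/-- The convex subdifferential of an extended-real-valued function:
`∂f(x) = { u : ∀ z, f z ≥ f x + ⟪u, z - x⟫ }`. -/
def ESubdiff {E : Type*} [NormedAddCommGroup E] [InnerProductSpace ℝ E]
    (f : E → EReal) (x : E) : Set E :=
  {u | ∀ z : E, f x + ((⟪u, z - x⟫ : ℝ) : EReal) ≤ f z}

/-- Properness of an extended-real-valued function: it never takes the value `⊥`
and is not identically `⊤`. -/
def EProper {E : Type*} (f : E → EReal) : Prop :=
  (∃ x, f x ≠ ⊤) ∧ ∀ x, f x ≠ ⊥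

/-- Convexity of an extended-real-valued function. -/
def EConvex {E : Type*} [NormedAddCommGroup E] [NormedSpace ℝ E] (f : E → EReal) : Prop :=
  ∀ x y : E, ∀ a b : ℝ, 0 ≤ a → 0 ≤ b → a + b = 1 →
    f (a • x + b • y) ≤ (a : EReal) * f x + (b : EReal) * f y

/-- The convex (Fenchel) conjugate `g*(y) = sup_x (⟪x, y⟫ - g x)`. -/
def EConj {E : Type*} [NormedAddCommGroup E] [InnerProductSpace ℝ E]
    (g : E → EReal) (y : E) : EReal :=
  ⨆ x : E, ((⟪x, y⟫ : ℝ) : EReal) - g x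

/-- `IsProx τ f x p` states that `p = prox_{τ f}(x)`, i.e. `p` minimizes
`fun z => f z + (1/(2τ)) ‖z - x‖²`. -/
def IsProx {E : Type*} [NormedAddCommGroup E] [InnerProductSpace ℝ E]
    (τ : ℝ) (f : E → EReal) (x p : E) : Prop :=
  ∀ z : E, f p + ((1 / (2 * τ) * ‖p - x‖ ^ 2 : ℝ) : EReal)
      ≤ f z + ((1 / (2 * τ) * ‖z - x‖ ^ 2 : ℝ) : EReal)

/-- The Lagrangian `𝓛(x, y) = f x + ⟪y, L x⟫ - g*(y)` of the saddle-point problem. -/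
def Lagr {E F : Type*} [NormedAddCommGroup E] [InnerProductSpace ℝ E]
    [NormedAddCommGroup F] [InnerProductSpace ℝ F]
    (f : E → EReal) (gs : F → EReal) (L : E →L[ℝ] F) (x : E) (y : F) : EReal :=
  f x + ((⟪y, L x⟫ : ℝ) : EReal) - gs y

lemma prox_ne_top {E : Type*} [NormedAddCommGroup E] [InnerProductSpace ℝ E]
    {τ : ℝ} {f : E → EReal} {v p : E} (hp : IsProx τ f v p)
    {z : E} (hz : f z ≠ ⊤) : f p ≠ ⊤ := by
  intro h
  have := hp z
  rw [h, EReal.top_add_of_ne_bot (by exact EReal.coe_ne_bot _), top_le_iff] at this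
  exact absurd this (EReal.add_lt_top hz (EReal.coe_ne_top _)).ne

lemma strong_prox {E : Type*} [NormedAddCommGroup E] [InnerProductSpace ℝ E]
    {f : E → EReal} (hconv : EConvex f) (hb : ∀ w, f w ≠ ⊥)
    {τ : ℝ} (hτ : 0 < τ) {v p : E} (hp : IsProx τ f v p) (hpt : f p ≠ ⊤)
    {z : E} (hzt : f z ≠ ⊤) :
    (f p).toReal ≤ (f z).toReal + 1/τ * ⟪p - v, (z - v) - (p - v)⟫ := by
  set a := p - v with ha
  set c := (z - v) - (p - v) with hc
  set fp := (f p).toReal with hfp'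
  set fz := (f z).toReal with hfz'
  have hfp : f p = (fp : EReal) := (EReal.coe_toReal hpt (hb p)).symm
  have hfz : f z = (fz : EReal) := (EReal.coe_toReal hzt (hb z)).symm
  have key : ∀ t : ℝ, 0 < t → t ≤ 1 → fp ≤ fz + 1/τ * ⟪a, c⟫ + t * (‖c‖^2 / (2*τ)) := by
    intro t ht ht1
    set z' := (1-t) • p + t • z with hz'
    have hcv := hconv p z (1-t) t (by linarith) ht.le (by ring)
    rw [hfp, hfz, ← EReal.coe_mul, ← EReal.coe_mul, ← EReal.coe_add] at hcv
    have hz't : f z' ≠ ⊤ := fun h => by rw [h] at hcv; exact absurd hcv (EReal.coe_lt_top _).not_ge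
    have hfz'' : f z' = ((f z').toReal : EReal) := (EReal.coe_toReal hz't (hb z')).symm
    rw [hfz''] at hcv
    have hcvR : (f z').toReal ≤ (1-t)*fp + t*fz := EReal.coe_le_coe_iff.mp hcv
    have hpx := hp z'
    rw [hfp, hfz'', ← EReal.coe_add, ← EReal.coe_add] at hpx
    have hpxR : fp + 1/(2*τ)*‖p - v‖^2 ≤ (f z').toReal + 1/(2*τ)*‖z' - v‖^2 :=
      EReal.coe_le_coe_iff.mp hpx
    have hzv : z' - v = a + t • c := by
      rw [hz', ha, hc]; module
    have hnorm : ‖z' - v‖^2 = ‖a‖^2 + 2*t*⟪a, c⟫ + t^2*‖c‖^2 := by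
      rw [hzv, @norm_add_sq_real, inner_smul_right, norm_smul]
      simp [mul_pow]
      ring
    have hτ0 : τ ≠ 0 := ne_of_gt hτ
    rw [← ha] at hpxR
    have h2 : t * fp ≤ t * (fz + 1/τ * ⟪a, c⟫ + t * (‖c‖^2 / (2*τ))) := by
      have e1 : 1/(2*τ)*‖z' - v‖^2 = 1/(2*τ)*‖a‖^2 + t*(1/τ*⟪a,c⟫) + t*(t*(‖c‖^2/(2*τ))) := by
        rw [hnorm]; field_simp
      nlinarith [hpxR, hcvR]
    exact le_of_mul_le_mul_left (by linarith [h2]) ht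
  by_contra hlt
  push_neg at hlt
  set D := ‖c‖^2 / (2*τ) with hD
  have hD0 : 0 ≤ D := div_nonneg (sq_nonneg _) (by linarith)
  set gap := fp - (fz + 1/τ * ⟪a, c⟫) with hgap
  have hgap0 : 0 < gap := by rw [hgap]; linarith
  set t := min 1 (gap / (D + 1)) with htdef
  have ht0 : 0 < t := lt_min one_pos (div_pos hgap0 (by linarith))
  have ht1 : t ≤ 1 := min_le_left _ _
  have hk := key t ht0 ht1
  have htD : t * D ≤ (gap / (D+1)) * D := by
    apply mul_le_mul_of_nonneg_right (min_le_right _ _) hD0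
  have : (gap / (D+1)) * D < gap := by
    rw [div_mul_eq_mul_div, div_lt_iff₀ (by linarith)]
    nlinarith
  linarith

theorem Fk_sub_Fk_succ_bound
    {𝓗 𝓖 : Type*}
    [NormedAddCommGroup 𝓗] [InnerProductSpace ℝ 𝓗] [CompleteSpace 𝓗]
    [NormedAddCommGroup 𝓖] [InnerProductSpace ℝ 𝓖] [CompleteSpace 𝓖]
    (f : 𝓗 → EReal) (g : 𝓖 → EReal) (gs : 𝓖 → EReal)
    (hf₁ : EProper f) (hf₂ : EConvex f) (hf₃ : LowerSemicontinuous f)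
    (hg₁ : EProper g) (hg₂ : EConvex g) (hg₃ : LowerSemicontinuous g)
    (hgs : gs = EConj g)
    (L : 𝓗 →L[ℝ] 𝓖) (hL : L ≠ 0)
    (τ σ θ : ℝ) (hτ : 0 < τ) (hσ : 0 < σ)
    (θ : ℝ)
    (xstar : 𝓗) (ystar : 𝓖)
    (hkkt₁ : -((ContinuousLinearMap.adjoint L) ystar) ∈ ESubdiff f xstar)
    (hkkt₂ : L xstar ∈ ESubdiff gs ystar)
    (x : ℕ → 𝓗) (y : ℕ → 𝓖)
    (hx : ∀ k : ℕ, IsProx τ f (x k - τ • (ContinuousLinearMap.adjoint L) (y k)) (x (k + 1)))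
    (hy : ∀ k : ℕ,
      IsProx σ gs (y k + σ • L (x (k + 1) + θ • (x (k + 1) - x k))) (y (k + 1)))
    (F : ℕ → EReal)
    (hF : ∀ k : ℕ, F k = f (x (k + 1)) - f xstar
      + ((⟪(ContinuousLinearMap.adjoint L) ystar, x (k + 1) - xstar⟫ : ℝ) : EReal))
    :
    ∀ k : ℕ, F k - F (k + 1) ≤ ((1 / τ * ⟪x k - x (k + 1), x (k + 1) - x (k + 2)⟫
      + ⟪ystar - y k, L (x (k + 1)) - L (x (k + 2))⟫ : ℝ) : EReal) := by
  intro k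
  obtain ⟨⟨z0, hz0⟩, hb⟩ := hf₁
  have hxst : f xstar ≠ ⊤ := by
    intro h
    have h2 := hkkt₁ z0
    rw [h, EReal.top_add_of_ne_bot (EReal.coe_ne_bot _), top_le_iff] at h2
    exact hz0 h2
  have hnt : ∀ j : ℕ, f (x (j + 1)) ≠ ⊤ := fun j => prox_ne_top (hx j) hz0
  set A := (f (x (k + 1))).toReal with hA'
  set B := (f (x (k + 2))).toReal with hB'
  set S := (f xstar).toReal with hS'
  have hA : f (x (k + 1)) = (A : EReal) := (EReal.coe_toReal (hnt k) (hb _)).symm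
  have hB : f (x (k + 2)) = (B : EReal) := (EReal.coe_toReal (hnt (k + 1)) (hb _)).symm
  have hS : f xstar = (S : EReal) := (EReal.coe_toReal hxst (hb _)).symm
  have hFk : F k = ((A - S + ⟪(ContinuousLinearMap.adjoint L) ystar,
      x (k + 1) - xstar⟫ : ℝ) : EReal) := by
    rw [hF k, hA, hS]; norm_cast
  have hFk1 : F (k + 1) = ((B - S + ⟪(ContinuousLinearMap.adjoint L) ystar,
      x (k + 2) - xstar⟫ : ℝ) : EReal) := by
    rw [hF (k + 1), hB, hS]; norm_cast
  rw [hFk, hFk1, ← EReal.coe_sub, EReal.coe_le_coe_iff]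
  -- real-valued inequality
  set v := x k - τ • (ContinuousLinearMap.adjoint L) (y k) with hv
  have hsp := strong_prox hf₂ hb hτ (hx k) (hnt k) (hnt (k + 1))
  simp only [show k + 1 + 1 = k + 2 from rfl] at hsp
  have e2 : (x (k + 2) - v) - (x (k + 1) - v) = x (k + 2) - x (k + 1) := by abel
  rw [e2] at hsp
  have e1 : x (k + 1) - v = (x (k + 1) - x k) + τ • (ContinuousLinearMap.adjoint L) (y k) := by
    rw [hv]; abel
  have expand : ⟪x (k + 1) - v, x (k + 2) - x (k + 1)⟫
      = ⟪x (k + 1) - x k, x (k + 2) - x (k + 1)⟫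
        + τ * ⟪y k, L (x (k + 2)) - L (x (k + 1))⟫ := by
    rw [e1, inner_add_left, real_inner_smul_left,
      ContinuousLinearMap.adjoint_inner_left, map_sub]
  have hτ0 : τ ≠ 0 := ne_of_gt hτ
  have hsp' : A ≤ B + 1 / τ * ⟪x (k + 1) - x k, x (k + 2) - x (k + 1)⟫
      + ⟪y k, L (x (k + 2)) - L (x (k + 1))⟫ := by
    have hdist : 1 / τ * (⟪x (k + 1) - x k, x (k + 2) - x (k + 1)⟫
        + τ * ⟪y k, L (x (k + 2)) - L (x (k + 1))⟫)
        = 1 / τ * ⟪x (k + 1) - x k, x (k + 2) - x (k + 1)⟫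
        + ⟪y k, L (x (k + 2)) - L (x (k + 1))⟫ := by
      field_simp
    rw [expand, hdist] at hsp
    linarith
  have Jeq : ⟪x k - x (k + 1), x (k + 1) - x (k + 2)⟫
      = ⟪x (k + 1) - x k, x (k + 2) - x (k + 1)⟫ := by
    rw [← inner_neg_neg, neg_sub, neg_sub]
  simp only [ContinuousLinearMap.adjoint_inner_left, map_sub, inner_sub_left,
    inner_sub_right] at hsp' Jeq ⊢
  linarith
end
end

section
/- Let (x_k), (y_k) be generated by the Chambolle–Pock iteration x_{k+1} = prox_{τf}(x_k − τ L* y_k), y_{k+1} = prox_{σ g*}(y_k + σ L(x_{k+1} + θ(x_{k+1} − x_k))), with θ ≥ 1/2 and τ, σ > 0 satisfying τσ‖L‖² ≤ 4/(1 + 2θ), at least one of these two inequalities being strict, and let (x⋆, y⋆) be a KKT point (−L*y⋆ ∈ ∂f(x⋆), Lx⋆ ∈ ∂g*(y⋆)). Define F_k = f(x_{k+1}) − f(x⋆) + ⟨L*y⋆, x_{k+1} − x⋆⟩, G_k = g*(y_{k+1}) − g*(y⋆) − ⟨Lx⋆, y_{k+1} − y⋆⟩, and V_k = θF_k + (1/2τ)‖x_{k+1}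 − x⋆‖² + (1/2σ)‖y_k − y⋆ + σθ(Lx_{k+1} − Lx_k)‖² + (θ/2τ)‖x_{k+1} − x_k‖² − (σ(4θ²+1)/16)‖Lx_{k+1} − Lx_k‖². Then for every nonnegative integer k, the Lyapunov inequality holds: V_{k+1} − V_k + F_k + G_k ≤ −(1/2σ)‖y_{k+1} − y_k − σ((1/2)(Lx_{k+1} − Lx_{k+2}) − θ(Lx_k − Lx_{k+1}))‖² − ((8θ − τσ‖L‖²(4θ²+1))/(16τ))‖x_{k+2} − x_{k+1} − (4(1 − τσθ‖L‖²)/(8θ − τσ‖L‖²(4θ²+1)))(x_{k+1} − x_k)‖² − ((4θ² − 1)(4 − τσ‖L‖²(2θ+1))(4 − τσ‖L‖²(2θ−1))/(16τ(8θ − τσ‖L‖²(4θ²+1))))‖x_{k+1} − x_k‖². -/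
open scoped RealInnerProductSpace
open Filter Topology

noncomputable section

section Aux
variable {E : Type*} [NormedAddCommGroup E] [InnerProductSpace ℝ E]

lemma isProx_ne_top {f : E → EReal} {τ : ℝ} {x p : E} (hp : IsProx τ f x p)
    {z : E} (hzt : f z ≠ ⊤) (hzb : f z ≠ ⊥) : f p ≠ ⊤ := by
  intro h
  have H := hp z
  rw [h, EReal.top_add_coe] at H
  lift f z to ℝ using ⟨hzt, hzb⟩ with r hr
  rw [← EReal.coe_add, top_le_iff] at H
  exact EReal.coe_ne_top _ H

lemma econj_ne_bot {f : E → EReal} (hf : EProper f) (y : E) : EConj f y ≠ ⊥ := by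
  obtain ⟨x₀, hx₀⟩ := hf.1
  intro h
  have h1 : ((⟪x₀, y⟫ : ℝ) : EReal) - f x₀ ≤ EConj f y :=
    le_iSup (fun x => ((⟪x, y⟫ : ℝ) : EReal) - f x) x₀
  rw [h, le_bot_iff] at h1
  lift f x₀ to ℝ using ⟨hx₀, hf.2 x₀⟩ with r hr
  rw [← EReal.coe_sub] at h1
  exact EReal.coe_ne_bot _ h1

lemma econj_convex {f : E → EReal} (hf : EProper f) : EConvex (EConj f) := by
  intro y1 y2 a b ha hb hab
  rw [EConj]
  apply iSup_le
  intro w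
  rcases eq_or_ne (f w) ⊤ with htop | htop
  · rw [htop]
    rw [EReal.sub_top]
    exact bot_le
  · have h1 : ((⟪w, y1⟫ : ℝ) : EReal) - f w ≤ EConj f y1 :=
      le_iSup (fun x => ((⟪x, y1⟫ : ℝ) : EReal) - f x) w
    have h2 : ((⟪w, y2⟫ : ℝ) : EReal) - f w ≤ EConj f y2 :=
      le_iSup (fun x => ((⟪x, y2⟫ : ℝ) : EReal) - f x) w
    lift f w to ℝ using ⟨htop, hf.2 w⟩ with r hr
    rw [← EReal.coe_sub] at h1 h2
    calc ((⟪w, a • y1 + b • y2⟫ : ℝ) : EReal) - (r : EReal)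
        = ((a * (⟪w, y1⟫ - r) + b * (⟪w, y2⟫ - r) : ℝ) : EReal) := by
          rw [← EReal.coe_sub]
          congr 1
          rw [inner_add_right, real_inner_smul_right, real_inner_smul_right]
          linear_combination r * hab
      _ = (a : EReal) * ((⟪w, y1⟫ - r : ℝ) : EReal) + (b : EReal) * ((⟪w, y2⟫ - r : ℝ) : EReal) := by
          rw [← EReal.coe_mul, ← EReal.coe_mul, ← EReal.coe_add]
      _ ≤ (a : EReal) * EConj f y1 + (b : EReal) * EConj f y2 := by
          gcongr

lemma prox_subgrad {f : E → EReal} (hconv : EConvex f) (hbot : ∀ w, f w ≠ ⊥)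
    {τ : ℝ} (hτ : 0 < τ) {x p : E} (hp : IsProx τ f x p) (hpt : f p ≠ ⊤)
    {z : E} (hzt : f z ≠ ⊤) :
    (f p).toReal + 1 / τ * ⟪x - p, z - p⟫ ≤ (f z).toReal := by
  obtain ⟨fp, hfp⟩ : ∃ r : ℝ, f p = (r : EReal) := ⟨_, (EReal.coe_toReal hpt (hbot p)).symm⟩
  obtain ⟨fz, hfz⟩ : ∃ r : ℝ, f z = (r : EReal) := ⟨_, (EReal.coe_toReal hzt (hbot z)).symm⟩
  rw [hfp, hfz, EReal.toReal_coe, EReal.toReal_coe]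
  have key : ∀ l : ℝ, 0 < l → l ≤ 1 →
      0 ≤ (fz - fp) + 1 / τ * ⟪p - x, z - p⟫ + l * (1 / (2 * τ) * ‖z - p‖ ^ 2) := by
    intro l hl hl1
    have hcvx := hconv p z (1 - l) l (by linarith) hl.le (by ring)
    have hvec : (1 - l) • p + l • z = p + l • (z - p) := by
      rw [sub_smul, one_smul, smul_sub]; abel
    rw [hvec, hfp, hfz, ← EReal.coe_mul, ← EReal.coe_mul, ← EReal.coe_add] at hcvx
    obtain ⟨fw, hfw⟩ : ∃ r : ℝ, f (p + l • (z - p)) = (r : EReal) :=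
      ⟨_, (EReal.coe_toReal (ne_top_of_le_ne_top (EReal.coe_ne_top _) hcvx) (hbot _)).symm⟩
    rw [hfw, EReal.coe_le_coe_iff] at hcvx
    have H := hp (p + l • (z - p))
    rw [hfp, hfw, ← EReal.coe_add, ← EReal.coe_add, EReal.coe_le_coe_iff] at H
    have hnorm : ‖p + l • (z - p) - x‖ ^ 2
        = ‖p - x‖ ^ 2 + 2 * (l * ⟪p - x, z - p⟫) + l ^ 2 * ‖z - p‖ ^ 2 := by
      have hv2 : p + l • (z - p) - x = (p - x) + l • (z - p) := by abel
      rw [hv2, norm_add_sq_real, real_inner_smul_right, norm_smul, Real.norm_eq_abs,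
        abs_of_pos hl, mul_pow]
    rw [hnorm] at H
    have h2 : 0 ≤ l * ((fz - fp) + 1 / τ * ⟪p - x, z - p⟫ + l * (1 / (2 * τ) * ‖z - p‖ ^ 2)) := by
      have hτ0 : τ ≠ 0 := ne_of_gt hτ
      have hexp : l * ((fz - fp) + 1 / τ * ⟪p - x, z - p⟫ + l * (1 / (2 * τ) * ‖z - p‖ ^ 2))
          = l * (fz - fp) + 1 / (2 * τ) * (2 * (l * ⟪p - x, z - p⟫)) +
            1 / (2 * τ) * (l ^ 2 * ‖z - p‖ ^ 2) := by
        field_simp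
      rw [hexp]
      linarith [H, hcvx]
    by_contra hcon
    push_neg at hcon
    nlinarith [mul_neg_of_pos_of_neg hl hcon]
  have hC0 : 0 ≤ 1 / (2 * τ) * ‖z - p‖ ^ 2 := by positivity
  have hB0 : 0 ≤ (fz - fp) + 1 / τ * ⟪p - x, z - p⟫ := by
    by_contra hneg
    push_neg at hneg
    set B := (fz - fp) + 1 / τ * ⟪p - x, z - p⟫ with hB
    set C := 1 / (2 * τ) * ‖z - p‖ ^ 2 with hC
    have hl0 : 0 < min 1 (-B / (2 * (C + 1))) := lt_min one_pos (div_pos (by linarith) (by positivity))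
    have h2 := key _ hl0 (min_le_left _ _)
    have h3 : min 1 (-B / (2 * (C + 1))) * (2 * (C + 1)) ≤ -B := by
      rw [← le_div_iff₀ (by positivity)]
      exact min_le_right _ _
    nlinarith [h2, h3, hl0, hC0]
  have hip : ⟪p - x, z - p⟫ = -⟪x - p, z - p⟫ := by
    rw [← neg_sub x p, inner_neg_left]
  rw [hip] at hB0
  linarith [hB0]

end Aux

set_option maxHeartbeats 4000000 in
theorem lyapunov_inequality
    {𝓗 𝓖 : Type*}
    [NormedAddCommGroup 𝓗] [InnerProductSpace ℝ 𝓗] [CompleteSpace 𝓗]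
    [NormedAddCommGroup 𝓖] [InnerProductSpace ℝ 𝓖] [CompleteSpace 𝓖]
    (f : 𝓗 → EReal) (g : 𝓖 → EReal) (gs : 𝓖 → EReal)
    (hf₁ : EProper f) (hf₂ : EConvex f) (hf₃ : LowerSemicontinuous f)
    (hg₁ : EProper g) (hg₂ : EConvex g) (hg₃ : LowerSemicontinuous g)
    (hgs : gs = EConj g)
    (L : 𝓗 →L[ℝ] 𝓖) (hL : L ≠ 0)
    (τ σ θ : ℝ) (hτ : 0 < τ) (hσ : 0 < σ)
    (hθ : 1 / 2 ≤ θ) (hstep : τ * σ * ‖L‖ ^ 2 ≤ 4 / (1 + 2 * θ))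
    (hstrict : 1 / 2 < θ ∨ τ * σ * ‖L‖ ^ 2 < 4 / (1 + 2 * θ))
    (xstar : 𝓗) (ystar : 𝓖)
    (hkkt₁ : -((ContinuousLinearMap.adjoint L) ystar) ∈ ESubdiff f xstar)
    (hkkt₂ : L xstar ∈ ESubdiff gs ystar)
    (x : ℕ → 𝓗) (y : ℕ → 𝓖)
    (hx : ∀ k : ℕ, IsProx τ f (x k - τ • (ContinuousLinearMap.adjoint L) (y k)) (x (k + 1)))
    (hy : ∀ k : ℕ,
      IsProx σ gs (y k + σ • L (x (k + 1) + θ • (x (k + 1) - x k))) (y (k + 1)))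
    (F : ℕ → EReal)
    (hF : ∀ k : ℕ, F k = f (x (k + 1)) - f xstar
      + ((⟪(ContinuousLinearMap.adjoint L) ystar, x (k + 1) - xstar⟫ : ℝ) : EReal))
    (G : ℕ → EReal)
    (hG : ∀ k : ℕ, G k = gs (y (k + 1)) - gs ystar
      - ((⟪L xstar, y (k + 1) - ystar⟫ : ℝ) : EReal))
    (V : ℕ → EReal)
    (hV : ∀ k : ℕ, V k = (θ : EReal) * F k
      + ((1 / (2 * τ) * ‖x (k + 1) - xstar‖ ^ 2
        + 1 / (2 * σ) * ‖y k - ystar + (σ * θ) • (L (x (k + 1)) - L (x k))‖ ^ 2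
        + θ / (2 * τ) * ‖x (k + 1) - x k‖ ^ 2
        - σ * (4 * θ ^ 2 + 1) / 16 * ‖L (x (k + 1)) - L (x k)‖ ^ 2 : ℝ) : EReal))
    :
    ∀ k : ℕ, V (k + 1) - V k + F k + G k ≤
      ((-(1 / (2 * σ)) * ‖y (k + 1) - y k
          - σ • ((1 / 2 : ℝ) • (L (x (k + 1)) - L (x (k + 2)))
            - θ • (L (x k) - L (x (k + 1))))‖ ^ 2
        - (8 * θ - τ * σ * ‖L‖ ^ 2 * (4 * θ ^ 2 + 1)) / (16 * τ)
          * ‖x (k + 2) - x (k + 1)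
            - (4 * (1 - τ * σ * θ * ‖L‖ ^ 2) / (8 * θ - τ * σ * ‖L‖ ^ 2 * (4 * θ ^ 2 + 1)))
              • (x (k + 1) - x k)‖ ^ 2
        - (4 * θ ^ 2 - 1) * (4 - τ * σ * ‖L‖ ^ 2 * (2 * θ + 1))
            * (4 - τ * σ * ‖L‖ ^ 2 * (2 * θ - 1))
            / (16 * τ * (8 * θ - τ * σ * ‖L‖ ^ 2 * (4 * θ ^ 2 + 1)))
          * ‖x (k + 1) - x k‖ ^ 2 : ℝ) : EReal) := by
  intro k
  by_cases hftop : f xstar = ⊤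
  · have hfall : f (x (k + 1)) = ⊤ := by
      have h := hkkt₁ (x (k + 1))
      rw [hftop, EReal.top_add_coe] at h
      exact top_le_iff.mp h
    have hFbot : F k = ⊥ := by
      rw [hF k, hfall, hftop, EReal.sub_top, EReal.bot_add]
    rw [hFbot, EReal.add_bot, EReal.bot_add]
    exact bot_le
  by_cases hgtop : gs ystar = ⊤
  · have hgall : gs (y (k + 1)) = ⊤ := by
      have h := hkkt₂ (y (k + 1))
      rw [hgtop, EReal.top_add_coe] at h
      exact top_le_iff.mp h
    have hGbot : G k = ⊥ := by
      rw [hG k, hgall, hgtop, EReal.sub_top, EReal.bot_sub]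
    rw [hGbot, EReal.add_bot]
    exact bot_le
  -- main case
  have hgbot : ∀ w, gs w ≠ ⊥ := by
    intro w; rw [hgs]; exact econj_ne_bot hg₁ w
  have hgconv : EConvex gs := by rw [hgs]; exact econj_convex hg₁
  have hfc_t : f (x (k + 1 + 1)) ≠ ⊤ := isProx_ne_top (hx (k + 1)) hftop (hf₁.2 xstar)
  have hfb_t : f (x (k + 1)) ≠ ⊤ := isProx_ne_top (hx k) hftop (hf₁.2 xstar)
  have hgv_t : gs (y (k + 1)) ≠ ⊤ := isProx_ne_top (hy k) hgtop (hgbot ystar)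
  obtain ⟨fb, hfb⟩ : ∃ r : ℝ, f (x (k + 1)) = (r : EReal) :=
    ⟨_, (EReal.coe_toReal hfb_t (hf₁.2 _)).symm⟩
  obtain ⟨fc, hfc⟩ : ∃ r : ℝ, f (x (k + 2)) = (r : EReal) :=
    ⟨_, (EReal.coe_toReal hfc_t (hf₁.2 _)).symm⟩
  obtain ⟨fs, hfs⟩ : ∃ r : ℝ, f xstar = (r : EReal) :=
    ⟨_, (EReal.coe_toReal hftop (hf₁.2 _)).symm⟩
  obtain ⟨gv, hgv⟩ : ∃ r : ℝ, gs (y (k + 1)) = (r : EReal) :=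
    ⟨_, (EReal.coe_toReal hgv_t (hgbot _)).symm⟩
  obtain ⟨gt, hgt⟩ : ∃ r : ℝ, gs ystar = (r : EReal) :=
    ⟨_, (EReal.coe_toReal hgtop (hgbot _)).symm⟩
  have I1 := prox_subgrad hf₂ hf₁.2 hτ (hx (k + 1)) hfc_t (z := xstar) hftop
  have I2 := prox_subgrad hf₂ hf₁.2 hτ (hx (k + 1)) hfc_t (z := x (k + 1)) hfb_t
  have I3 := prox_subgrad hf₂ hf₁.2 hτ (hx k) hfb_t (z := x (k + 2)) hfc_t
  have I4 := prox_subgrad hgconv hgbot hσ (hy k) hgv_t (z := ystar) hgtop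
  simp only [show k + 1 + 1 = k + 2 from rfl] at I1 I2 I3 hfc_t
  simp only [hfb, hfc, hfs, hgv, hgt, EReal.toReal_coe] at I1 I2 I3 I4
  have hS1 : 0 ≤ fs - fc - 1 / τ * ⟪x (k + 1) - τ • (ContinuousLinearMap.adjoint L) (y (k + 1)) - x (k + 2), xstar - x (k + 2)⟫ := by linarith
  have hS2 : 0 ≤ fb - fc - 1 / τ * ⟪x (k + 1) - τ • (ContinuousLinearMap.adjoint L) (y (k + 1)) - x (k + 2), x (k + 1) - x (k + 2)⟫ := by linarith
  have hS2c : 0 ≤ fc - fb - 1 / τ * ⟪x k - τ • (ContinuousLinearMap.adjoint L) (y k) - x (k + 1), x (k + 2) - x (k + 1)⟫ := by linarith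
  have hS3 : 0 ≤ gt - gv - 1 / σ * ⟪y k + σ • L (x (k + 1) + θ • (x (k + 1) - x k)) - y (k + 1), ystar - y (k + 1)⟫ := by linarith
  have hS7 : 0 ≤ ‖L‖ ^ 2 * ‖x (k + 1) - x k‖ ^ 2 - ‖L (x (k + 1)) - L (x k)‖ ^ 2 := by
    rw [← map_sub]
    have h := L.le_opNorm (x (k + 1) - x k)
    have h2 := pow_le_pow_left₀ (norm_nonneg _) h 2
    rw [mul_pow] at h2
    linarith
  have hS8 : 0 ≤ ‖L‖ ^ 2 * ‖x (k + 2) - x (k + 1)‖ ^ 2 - ‖L (x (k + 2)) - L (x (k + 1))‖ ^ 2 := by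
    rw [← map_sub]
    have h := L.le_opNorm (x (k + 2) - x (k + 1))
    have h2 := pow_le_pow_left₀ (norm_nonneg _) h 2
    rw [mul_pow] at h2
    linarith
  have hS9 : 0 ≤ ‖L‖ ^ 2 * ‖x (k + 1) - x k - (x (k + 2) - x (k + 1))‖ ^ 2 - ‖L (x (k + 1)) - L (x k) - (L (x (k + 2)) - L (x (k + 1)))‖ ^ 2 := by
    rw [← map_sub, ← map_sub, ← map_sub]
    have h := L.le_opNorm (x (k + 1) - x k - (x (k + 2) - x (k + 1)))
    have h2 := pow_le_pow_left₀ (norm_nonneg _) h 2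
    rw [mul_pow] at h2
    linarith
  have h2θ : (0:ℝ) < 1 + 2 * θ := by linarith
  have hQ0 : (0:ℝ) ≤ τ * σ * ‖L‖ ^ 2 := by positivity
  have hQ4 : τ * σ * ‖L‖ ^ 2 * (1 + 2 * θ) ≤ 4 := (le_div_iff₀ h2θ).mp hstep
  have hβ : (0:ℝ) < 8 * θ - τ * σ * ‖L‖ ^ 2 * (4 * θ ^ 2 + 1) := by
    rcases hstrict with h | h
    · nlinarith [hQ0, hQ4, h, mul_le_mul_of_nonneg_right hQ4 (show (0:ℝ) ≤ 4 * θ ^ 2 + 1 by positivity)]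
    · have h4 : τ * σ * ‖L‖ ^ 2 * (1 + 2 * θ) < 4 := (lt_div_iff₀ h2θ).mp h
      nlinarith [hQ0, hθ, mul_lt_mul_of_pos_right h4 (show (0:ℝ) < 4 * θ ^ 2 + 1 by positivity)]
  have key : (-(1 / (2 * σ)) * ‖y (k + 1) - y k - σ • ((1 / 2 : ℝ) • (L (x (k + 1)) - L (x (k + 2))) - θ • (L (x k) - L (x (k + 1))))‖ ^ 2 - (8 * θ - τ * σ * ‖L‖ ^ 2 * (4 * θ ^ 2 + 1)) / (16 * τ) * ‖x (k + 2) - x (k + 1) - (4 * (1 - τ * σ * θ * ‖L‖ ^ 2) / (8 * θ - τ * σ * ‖L‖ ^ 2 * (4 * θ ^ 2 + 1))) • (x (k + 1) - x k)‖ ^ 2 - (4 * θ ^ 2 - 1) * (4 - τ * σ * ‖L‖ ^ 2 * (2 * θ + 1)) * (4 - τ * σ * ‖L‖ ^ 2 * (2 * θ - 1)) / (16 * τ * (8 * θ - τ * σ * ‖L‖ ^ 2 * (4 * θ ^ 2 + 1))) * ‖x (k + 1) - x k‖ ^ 2)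
      - ((θ * (fc - fs + ⟪(ContinuousLinearMap.adjoint L) ystar, x (k + 2) - xstar⟫) + (1 / (2 * τ) * ‖x (k + 2) - xstar‖ ^ 2 + 1 / (2 * σ) * ‖y (k + 1) - ystar + (σ * θ) • (L (x (k + 2)) - L (x (k + 1)))‖ ^ 2 + θ / (2 * τ) * ‖x (k + 2) - x (k + 1)‖ ^ 2 - σ * (4 * θ ^ 2 + 1) / 16 * ‖L (x (k + 2)) - L (x (k + 1))‖ ^ 2)) - (θ * (fb - fs + ⟪(ContinuousLinearMap.adjoint L) ystar, x (k + 1) - xstar⟫) + (1 / (2 * τ) * ‖x (k + 1) - xstar‖ ^ 2 + 1 / (2 * σ) * ‖y k - ystar + (σ * θ) • (L (x (k + 1)) - L (x k))‖ ^ 2 + θ / (2 * τ) * ‖x (k + 1) - x k‖ ^ 2 - σ * (4 * θ ^ 2 + 1) / 16 * ‖L (x (k + 1)) - L (x k)‖ ^ 2)) + (fb - fs + ⟪(ContinuousLinearMap.adjoint L) ystar, x (k + 1) - xstar⟫) + (gv - gt - ⟪L xstar, y (k + 1) - ystar⟫))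
      = (fs - fc - 1 / τ * ⟪x (k + 1) - τ • (ContinuousLinearMap.adjoint L) (y (k + 1)) - x (k + 2), xstar - x (k + 2)⟫) + (θ - 1 / 2) * (fb - fc - 1 / τ * ⟪x (k + 1) - τ • (ContinuousLinearMap.adjoint L) (y (k + 1)) - x (k + 2), x (k + 1) - x (k + 2)⟫) + 1 / 2 * (fc - fb - 1 / τ * ⟪x k - τ • (ContinuousLinearMap.adjoint L) (y k) - x (k + 1), x (k + 2) - x (k + 1)⟫) + (gt - gv - 1 / σ * ⟪y k + σ • L (x (k + 1) + θ • (x (k + 1) - x k)) - y (k + 1), ystar - y (k + 1)⟫) + σ * (2 * θ - 1) ^ 2 / 16 * (‖L‖ ^ 2 * ‖x (k + 1) - x k‖ ^ 2 - ‖L (x (k + 1)) - L (x k)‖ ^ 2) + σ * (2 * θ - 1) ^ 2 / 16 * (‖L‖ ^ 2 * ‖x (k + 2) - x (k + 1)‖ ^ 2 - ‖L (x (k + 2)) - L (x (k + 1))‖ ^ 2) + σ * θ / 4 * (‖L‖ ^ 2 * ‖x (k + 1) - x k - (x (k + 2) - x (k + 1))‖ ^ 2 - ‖L (x (k + 1))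 - L (x k) - (L (x (k + 2)) - L (x (k + 1)))‖ ^ 2) := by
    simp only [map_sub, map_add, map_smul, inner_sub_left, inner_sub_right, inner_add_left,
      inner_add_right, real_inner_smul_left, real_inner_smul_right,
      ContinuousLinearMap.adjoint_inner_left, ← real_inner_self_eq_norm_sq,
      real_inner_comm (x (k + 1)) (x k),
    real_inner_comm (x (k + 2)) (x k),
    real_inner_comm (x (k + 2)) (x (k + 1)),
    real_inner_comm xstar (x k),
    real_inner_comm xstar (x (k + 1)),
    real_inner_comm xstar (x (k + 2)),
    real_inner_comm (y (k + 1)) (y k),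
    real_inner_comm ystar (y k),
    real_inner_comm ystar (y (k + 1)),
    real_inner_comm (L (x k)) (y k),
    real_inner_comm (L (x k)) (y (k + 1)),
    real_inner_comm (L (x k)) ystar,
    real_inner_comm (L (x (k + 1))) (y k),
    real_inner_comm (L (x (k + 1))) (y (k + 1)),
    real_inner_comm (L (x (k + 1))) ystar,
    real_inner_comm (L (x (k + 1))) (L (x k)),
    real_inner_comm (L (x (k + 2))) (y k),
    real_inner_comm (L (x (k + 2))) (y (k + 1)),
    real_inner_comm (L (x (k + 2))) ystar,
    real_inner_comm (L (x (k + 2))) (L (x k)),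
    real_inner_comm (L (x (k + 2))) (L (x (k + 1))),
    real_inner_comm (L xstar) (y k),
    real_inner_comm (L xstar) (y (k + 1)),
    real_inner_comm (L xstar) ystar,
    real_inner_comm (L xstar) (L (x k)),
    real_inner_comm (L xstar) (L (x (k + 1))),
    real_inner_comm (L xstar) (L (x (k + 2)))]
    have hτne : τ ≠ 0 := hτ.ne'
    have hσne : σ ≠ 0 := hσ.ne'
    have hβne : 8 * θ - τ * σ * ‖L‖ ^ 2 * (4 * θ ^ 2 + 1) ≠ 0 := hβ.ne'
    generalize hB : 8 * θ - τ * σ * ‖L‖ ^ 2 * (4 * θ ^ 2 + 1) = β at hβne ⊢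
    field_simp
    rw [← hB]
    ring
  have hT2 : 0 ≤ (θ - 1 / 2) * (fb - fc - 1 / τ * ⟪x (k + 1) - τ • (ContinuousLinearMap.adjoint L) (y (k + 1)) - x (k + 2), x (k + 1) - x (k + 2)⟫) := mul_nonneg (by linarith) hS2
  have hT2c : 0 ≤ 1 / 2 * (fc - fb - 1 / τ * ⟪x k - τ • (ContinuousLinearMap.adjoint L) (y k) - x (k + 1), x (k + 2) - x (k + 1)⟫) := mul_nonneg (by norm_num) hS2c
  have hT7 : 0 ≤ σ * (2 * θ - 1) ^ 2 / 16 * (‖L‖ ^ 2 * ‖x (k + 1) - x k‖ ^ 2 - ‖L (x (k + 1)) - L (x k)‖ ^ 2) := mul_nonneg (by positivity) hS7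
  have hT8 : 0 ≤ σ * (2 * θ - 1) ^ 2 / 16 * (‖L‖ ^ 2 * ‖x (k + 2) - x (k + 1)‖ ^ 2 - ‖L (x (k + 2)) - L (x (k + 1))‖ ^ 2) := mul_nonneg (by positivity) hS8
  have hT9 : 0 ≤ σ * θ / 4 * (‖L‖ ^ 2 * ‖x (k + 1) - x k - (x (k + 2) - x (k + 1))‖ ^ 2 - ‖L (x (k + 1)) - L (x k) - (L (x (k + 2)) - L (x (k + 1)))‖ ^ 2) := mul_nonneg (by nlinarith) hS9
  rw [hV (k + 1), hV k, hF (k + 1), hF k, hG k]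
  simp only [show k + 1 + 1 = k + 2 from rfl]
  rw [hfb, hfc, hfs, hgv, hgt]
  norm_cast
  linarith [key, hS1, hS3, hT2, hT2c, hT7, hT8, hT9]
end
end
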